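/- Let φ, α : ℂ → ℂ be entire functions and define A₀(x,y) = α(x), A_{n+1}(x,y) = y·∂A_n/∂x(x,y) − φ'(x)·∂A_n/∂y(x,y) (so A_n = X_h^n α for the Hamiltonian vector field X_h = y ∂/∂x − φ'(x) ∂/∂y of h = y²/2 + φ(x)). If A₅(x,y) = 0 for all (x,y) ∈ ℂ² and the fourth derivative α⁗ is not identically zero, then α is a polynomial of degree exactly 4 and φ' ≡ 0 (i.e., φ is constant). -/

import Mathlib

open Polynomial in
open scoped ContDiff in
lemma entire_deriv' {f : ℂ → ℂ} (hf : Differentiable ℂ f) : Differentiable ℂ (deriv f) :=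
  ((contDiff_infty_iff_deriv.mp (hf.contDiff (n := ∞))).2).differentiable (by norm_num)

lemma const_of_deriv_zero' {f : ℂ → ℂ} (hf : Differentiable ℂ f) (h : ∀ x, deriv f x = 0)
    (x : ℂ) : f x = f 0 :=
  is_const_of_deriv_eq_zero hf h x 0

open Polynomial in
lemma poly_primitive' (Q : Polynomial ℂ) : ∃ P : Polynomial ℂ, P.derivative = Q := by
  refine ⟨Q.sum fun n a => C (a / (n + 1)) * X ^ (n + 1), ?_⟩
  conv_rhs => rw [← Q.sum_C_mul_X_pow_eq]
  rw [Polynomial.sum, Polynomial.sum, map_sum]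
  refine Finset.sum_congr rfl fun n _ => ?_
  rw [derivative_C_mul, derivative_X_pow]
  push_cast
  rw [← mul_assoc, ← map_mul]
  congr 2
  rw [div_mul_cancel₀]
  exact_mod_cast Nat.cast_add_one_ne_zero (R := ℂ) n

open Polynomial in
lemma poly_step' {f : ℂ → ℂ} (hf : Differentiable ℂ f) (Q : Polynomial ℂ)
    (h : ∀ x, deriv f x = Q.eval x) :
    ∃ P : Polynomial ℂ, P.derivative = Q ∧ ∀ x, f x = P.eval x := by
  obtain ⟨P₀, hP₀⟩ := poly_primitive' Q
  have hg : Differentiable ℂ fun x => f x - P₀.eval x :=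
    hf.sub (Polynomial.differentiable P₀)
  have hd : ∀ x, deriv (fun x => f x - P₀.eval x) x = 0 := by
    intro x
    rw [deriv_fun_sub (hf x) ((Polynomial.differentiable P₀) x), h x, Polynomial.deriv, hP₀,
      sub_self]
  have hc := const_of_deriv_zero' hg hd
  refine ⟨P₀ + C (f 0 - P₀.eval 0), by simp [hP₀], fun x => ?_⟩
  have := hc x
  try simp only at this
  simp only [eval_add, eval_C]
  linear_combination this

open Polynomial in
lemma exists_poly' (n : ℕ) : ∀ f : ℂ → ℂ, Differentiable ℂ f →
    (∀ x, iteratedDeriv n f x = 0) →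
    ∃ P : Polynomial ℂ, derivative^[n] P = 0 ∧ ∀ x, f x = P.eval x := by
  induction n with
  | zero =>
    intro f _ h
    exact ⟨0, by simp, fun x => by simpa using h x⟩
  | succ n ih =>
    intro f hf h
    have h' : ∀ x, iteratedDeriv n (deriv f) x = 0 := by
      intro x
      have := h x
      rwa [iteratedDeriv_succ'] at this
    obtain ⟨P₁, hP₁, hP₁f⟩ := ih (deriv f) (entire_deriv' hf) h'
    obtain ⟨P, hPd, hPf⟩ := poly_step' hf P₁ hP₁f
    exact ⟨P, by rw [Function.iterate_succ_apply, hPd, hP₁], hPf⟩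

open Polynomial in
lemma natdeg_le' (n : ℕ) : ∀ Q : Polynomial ℂ, derivative^[n + 1] Q = 0 → Q.natDegree ≤ n := by
  induction n with
  | zero =>
    intro Q h
    rw [zero_add, Function.iterate_one] at h
    exact le_of_eq (natDegree_eq_zero_of_derivative_eq_zero h)
  | succ n ih =>
    intro Q h
    rcases Nat.eq_zero_or_pos Q.natDegree with h0 | hpos
    · omega
    · have h' : derivative^[n + 1] (derivative Q) = 0 := by
        rw [← Function.iterate_succ_apply]; exact h
      have h1 := ih _ h'
      have h2 : (derivative Q).natDegree = Q.natDegree - 1 :=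
        natDegree_eq_of_degree_eq_some (degree_derivative_eq Q hpos)
      omega

open Polynomial in
lemma div_key' : ∀ (n : ℕ) (p : Polynomial ℂ), p.natDegree = n → p ≠ 0 →
    ∀ h : ℂ → ℂ, Continuous h →
    ∀ Q : Polynomial ℂ, (∀ x, p.eval x * h x = Q.eval x) →
    ∃ S : Polynomial ℂ, Q = p * S ∧ ∀ x, h x = S.eval x := by
  intro n
  induction n with
  | zero =>
    intro p hdeg hp h hc Q hQ
    set c := p.coeff 0 with hcdef
    have hpC : p = C c := eq_C_of_natDegree_eq_zero hdeg
    have hc0 : c ≠ 0 := by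
      intro h0
      exact hp (by rw [hpC, h0, map_zero])
    refine ⟨C c⁻¹ * Q, ?_, fun x => ?_⟩
    · rw [hpC, ← mul_assoc, ← map_mul, mul_inv_cancel₀ hc0, map_one, one_mul]
    · have := hQ x
      rw [hpC] at this
      simp only [eval_C, eval_mul] at this ⊢
      field_simp
      linear_combination this
  | succ n ih =>
    intro p hdeg hp h hc Q hQ
    have hdegpos : 0 < p.degree := natDegree_pos_iff_degree_pos.mp (hdeg ▸ n.succ_pos)
    obtain ⟨r, hr⟩ := Complex.exists_root hdegpos
    obtain ⟨p₁, hp₁⟩ := dvd_iff_isRoot.mpr hr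
    have hQr : Q.IsRoot r := by
      have := hQ r
      rw [hr.eq_zero, zero_mul] at this
      exact this.symm
    obtain ⟨Q₁, hQ₁⟩ := dvd_iff_isRoot.mpr hQr
    have hp₁0 : p₁ ≠ 0 := fun h0 => hp (by rw [hp₁, h0, mul_zero])
    have hdeg₁ : p₁.natDegree = n := by
      have hX : (X - C r : Polynomial ℂ) ≠ 0 := X_sub_C_ne_zero r
      have := natDegree_mul hX hp₁0
      rw [← hp₁, hdeg, natDegree_X_sub_C] at this
      omega
    have heq : ∀ x, p₁.eval x * h x = Q₁.eval x := by
      have hfun : (fun x => p₁.eval x * h x) = fun x => Q₁.eval x := by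
        apply Continuous.ext_on (dense_compl_singleton r)
          ((p₁.continuous).mul hc) Q₁.continuous
        intro x hx
        have hxr : x - r ≠ 0 := sub_ne_zero.mpr hx
        have h2 := hQ x
        rw [hp₁, hQ₁] at h2
        simp only [eval_mul, eval_sub, eval_X, eval_C] at h2
        have h3 : (x - r) * (p₁.eval x * h x) = (x - r) * Q₁.eval x := by
          linear_combination h2
        exact mul_left_cancel₀ hxr h3
      exact fun x => congrFun hfun x
    obtain ⟨S, hS, hhS⟩ := ih p₁ hdeg₁ hp₁0 h hc Q₁ heq
    exact ⟨S, by rw [hQ₁, hS, hp₁, mul_assoc], hhS⟩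

/-- For entire `φ, α : ℂ → ℂ`, let `A n = X_h^n α` be the iterated Lie
derivatives along the Hamiltonian vector field `X_h = y ∂/∂x − φ'(x) ∂/∂y` of
`h = y²/2 + φ(x)`, i.e. `A 0 (x,y) = α x` and
`A (n+1) (x,y) = y ∂A_n/∂x − φ'(x) ∂A_n/∂y`. If `A 5 ≡ 0` on `ℂ²` and `α⁗` is not
identically zero, then `α` is a polynomial of degree exactly `4` and `φ' ≡ 0`. -/
theorem statement1
    (φ α : ℂ → ℂ) (hφ : Differentiable ℂ φ) (hα : Differentiable ℂ α)
    (A : ℕ → ℂ × ℂ → ℂ)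
    (hA0 : ∀ x y : ℂ, A 0 (x, y) = α x)
    (hArec : ∀ (n : ℕ) (x y : ℂ),
      A (n + 1) (x, y) =
        y * deriv (fun s => A n (s, y)) x - deriv φ x * deriv (fun s => A n (x, s)) y)
    (h5 : ∀ x y : ℂ, A 5 (x, y) = 0)
    (hα4 : ∃ x : ℂ, iteratedDeriv 4 α x ≠ 0) :
    (∃ P : Polynomial ℂ, P.degree = 4 ∧ ∀ x : ℂ, α x = P.eval x) ∧
      ∀ x : ℂ, deriv φ x = 0 := by
  classical
  -- name the derivative towers
  set p0 : ℂ → ℂ := deriv φ with hp0def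
  set p1 : ℂ → ℂ := deriv p0 with hp1def
  set p2 : ℂ → ℂ := deriv p1 with hp2def
  set p3 : ℂ → ℂ := deriv p2 with hp3def
  set d1 : ℂ → ℂ := deriv α with hd1def
  set d2 : ℂ → ℂ := deriv d1 with hd2def
  set d3 : ℂ → ℂ := deriv d2 with hd3def
  set d4 : ℂ → ℂ := deriv d3 with hd4def
  set d5 : ℂ → ℂ := deriv d4 with hd5def
  have hp0diff : Differentiable ℂ p0 := by rw [hp0def]; exact entire_deriv' hφ
  have hp1diff : Differentiable ℂ p1 := by rw [hp1def]; exact entire_deriv' hp0diff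
  have hp2diff : Differentiable ℂ p2 := by rw [hp2def]; exact entire_deriv' hp1diff
  have hp3diff : Differentiable ℂ p3 := by rw [hp3def]; exact entire_deriv' hp2diff
  have hd1diff : Differentiable ℂ d1 := by rw [hd1def]; exact entire_deriv' hα
  have hd2diff : Differentiable ℂ d2 := by rw [hd2def]; exact entire_deriv' hd1diff
  have hd3diff : Differentiable ℂ d3 := by rw [hd3def]; exact entire_deriv' hd2diff
  have hd4diff : Differentiable ℂ d4 := by rw [hd4def]; exact entire_deriv' hd3diff
  have Hp0 : ∀ x, HasDerivAt p0 (p1 x) x := fun x => by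
    rw [hp1def]; exact (hp0diff x).hasDerivAt
  have Hp1 : ∀ x, HasDerivAt p1 (p2 x) x := fun x => by
    rw [hp2def]; exact (hp1diff x).hasDerivAt
  have Hp2 : ∀ x, HasDerivAt p2 (p3 x) x := fun x => by
    rw [hp3def]; exact (hp2diff x).hasDerivAt
  have Hα : ∀ x, HasDerivAt α (d1 x) x := fun x => by
    rw [hd1def]; exact (hα x).hasDerivAt
  have Hd1 : ∀ x, HasDerivAt d1 (d2 x) x := fun x => by
    rw [hd2def]; exact (hd1diff x).hasDerivAt
  have Hd2 : ∀ x, HasDerivAt d2 (d3 x) x := fun x => by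
    rw [hd3def]; exact (hd2diff x).hasDerivAt
  have Hd3 : ∀ x, HasDerivAt d3 (d4 x) x := fun x => by
    rw [hd4def]; exact (hd3diff x).hasDerivAt
  have Hd4 : ∀ x, HasDerivAt d4 (d5 x) x := fun x => by
    rw [hd5def]; exact (hd4diff x).hasDerivAt
  -- explicit formulas for A 1 .. A 5
  have hA1 : ∀ x y : ℂ, A 1 (x, y) = y * d1 x := by
    intro x y
    rw [hArec 0 x y]
    have e1 : (fun s => A 0 (s, y)) = α := funext fun s => hA0 s y
    have e2 : (fun s => A 0 (x, s)) = fun _ => α x := funext fun s => hA0 x s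
    rw [e1, e2, deriv_const]
    rw [← hd1def]
    ring
  have hA2 : ∀ x y : ℂ, A 2 (x, y) = y ^ 2 * d2 x - p0 x * d1 x := by
    intro x y
    rw [hArec 1 x y]
    have e1 : (fun s => A 1 (s, y)) = fun s => y * d1 s := funext fun s => hA1 s y
    have e2 : (fun s => A 1 (x, s)) = fun s => s * d1 x := funext fun s => hA1 x s
    rw [e1, e2, (((Hd1 x).const_mul y)).deriv, (hasDerivAt_mul_const (d1 x)).deriv]
    ring
  have hA3 : ∀ x y : ℂ, A 3 (x, y)
      = y ^ 3 * d3 x - y * (3 * (p0 x * d2 x) + p1 x * d1 x) := by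
    intro x y
    rw [hArec 2 x y]
    have e1 : (fun s => A 2 (s, y)) = fun s => y ^ 2 * d2 s - p0 s * d1 s :=
      funext fun s => hA2 s y
    have e2 : (fun s => A 2 (x, s)) = fun s => s ^ 2 * d2 x - p0 x * d1 x :=
      funext fun s => hA2 x s
    have D1 : HasDerivAt (fun s => y ^ 2 * d2 s - p0 s * d1 s)
        (y ^ 2 * d3 x - (p1 x * d1 x + p0 x * d2 x)) x :=
      ((Hd2 x).const_mul (y ^ 2)).sub ((Hp0 x).mul (Hd1 x))
    have D2 : HasDerivAt (fun s => s ^ 2 * d2 x - p0 x * d1 x)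
        ((2 : ℕ) * y ^ (2 - 1) * d2 x) y :=
      ((hasDerivAt_pow 2 y).mul_const (d2 x)).sub_const _
    rw [e1, e2, D1.deriv, D2.deriv]
    push_cast
    ring
  have hA4 : ∀ x y : ℂ, A 4 (x, y)
      = y ^ 4 * d4 x - y ^ 2 * (6 * (p0 x * d3 x) + 4 * (p1 x * d2 x) + p2 x * d1 x)
        + (3 * (p0 x ^ 2 * d2 x) + p0 x * p1 x * d1 x) := by
    intro x y
    rw [hArec 3 x y]
    have e1 : (fun s => A 3 (s, y))
        = fun s => y ^ 3 * d3 s - y * (3 * (p0 s * d2 s) + p1 s * d1 s) :=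
      funext fun s => hA3 s y
    have e2 : (fun s => A 3 (x, s))
        = fun s => s ^ 3 * d3 x - s * (3 * (p0 x * d2 x) + p1 x * d1 x) :=
      funext fun s => hA3 x s
    have D1 : HasDerivAt (fun s => y ^ 3 * d3 s - y * (3 * (p0 s * d2 s) + p1 s * d1 s))
        (y ^ 3 * d4 x
          - y * (3 * (p1 x * d2 x + p0 x * d3 x) + (p2 x * d1 x + p1 x * d2 x))) x :=
      ((Hd3 x).const_mul (y ^ 3)).sub
        (((((Hp0 x).mul (Hd2 x)).const_mul 3).add ((Hp1 x).mul (Hd1 x))).const_mul y)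
    have D2 : HasDerivAt (fun s => s ^ 3 * d3 x - s * (3 * (p0 x * d2 x) + p1 x * d1 x))
        ((3 : ℕ) * y ^ (3 - 1) * d3 x - (3 * (p0 x * d2 x) + p1 x * d1 x)) y :=
      ((hasDerivAt_pow 3 y).mul_const (d3 x)).sub
        (hasDerivAt_mul_const (3 * (p0 x * d2 x) + p1 x * d1 x))
    rw [e1, e2, D1.deriv, D2.deriv]
    push_cast
    ring
  have hA5 : ∀ x y : ℂ, A 5 (x, y)
      = y ^ 5 * d5 x
        - y ^ 3 * (10 * (p0 x * d4 x) + 10 * (p1 x * d3 x) + 5 * (p2 x * d2 x) + p3 x * d1 x)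
        + y * (15 * (p0 x ^ 2 * d3 x) + 15 * (p0 x * p1 x * d2 x)
            + (p1 x ^ 2 + 3 * (p0 x * p2 x)) * d1 x) := by
    intro x y
    rw [hArec 4 x y]
    have e1 : (fun s => A 4 (s, y))
        = fun s => y ^ 4 * d4 s - y ^ 2 * (6 * (p0 s * d3 s) + 4 * (p1 s * d2 s) + p2 s * d1 s)
            + (3 * (p0 s ^ 2 * d2 s) + p0 s * p1 s * d1 s) :=
      funext fun s => hA4 s y
    have e2 : (fun s => A 4 (x, s))
        = fun s => s ^ 4 * d4 x - s ^ 2 * (6 * (p0 x * d3 x) + 4 * (p1 x * d2 x) + p2 x * d1 x)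
            + (3 * (p0 x ^ 2 * d2 x) + p0 x * p1 x * d1 x) :=
      funext fun s => hA4 x s
    have D1 : HasDerivAt
        (fun s => y ^ 4 * d4 s - y ^ 2 * (6 * (p0 s * d3 s) + 4 * (p1 s * d2 s) + p2 s * d1 s)
            + (3 * (p0 s ^ 2 * d2 s) + p0 s * p1 s * d1 s))
        (y ^ 4 * d5 x
          - y ^ 2 * (6 * (p1 x * d3 x + p0 x * d4 x) + 4 * (p2 x * d2 x + p1 x * d3 x)
              + (p3 x * d1 x + p2 x * d2 x))
          + (3 * (((2 : ℕ) * p0 x ^ (2 - 1) * p1 x) * d2 x + p0 x ^ 2 * d3 x)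
              + ((p1 x * p1 x + p0 x * p2 x) * d1 x + p0 x * p1 x * d2 x))) x := by
      refine HasDerivAt.add ?_ ?_
      · refine HasDerivAt.sub ((Hd4 x).const_mul (y ^ 4)) ?_
        exact ((((Hp0 x).mul (Hd3 x)).const_mul 6).add
          (((Hp1 x).mul (Hd2 x)).const_mul 4)).add ((Hp2 x).mul (Hd1 x)) |>.const_mul (y ^ 2)
      · exact ((((Hp0 x).pow 2).mul (Hd2 x)).const_mul 3).add
          (((Hp0 x).mul (Hp1 x)).mul (Hd1 x))
    have D2 : HasDerivAt
        (fun s => s ^ 4 * d4 x - s ^ 2 * (6 * (p0 x * d3 x) + 4 * (p1 x * d2 x) + p2 x * d1 x)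
            + (3 * (p0 x ^ 2 * d2 x) + p0 x * p1 x * d1 x))
        ((4 : ℕ) * y ^ (4 - 1) * d4 x
          - (2 : ℕ) * y ^ (2 - 1) * (6 * (p0 x * d3 x) + 4 * (p1 x * d2 x) + p2 x * d1 x)) y := by
      refine HasDerivAt.add_const _ ?_
      exact ((hasDerivAt_pow 4 y).mul_const (d4 x)).sub
        ((hasDerivAt_pow 2 y).mul_const (6 * (p0 x * d3 x) + 4 * (p1 x * d2 x) + p2 x * d1 x))
    rw [e1, e2, D1.deriv, D2.deriv]
    push_cast
    ring
  -- extract the coefficients of the polynomial identity in y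
  have hkey : ∀ x : ℂ, d5 x = 0 ∧
      10 * (p0 x * d4 x) + 10 * (p1 x * d3 x) + 5 * (p2 x * d2 x) + p3 x * d1 x = 0 := by
    intro x
    have h1 := h5 x 1
    have h2 := h5 x 2
    have h3 := h5 x 3
    rw [hA5 x 1] at h1
    rw [hA5 x 2] at h2
    rw [hA5 x 3] at h3
    constructor
    · linear_combination (5 * h1 - 4 * h2 + h3) / 120
    · linear_combination (13 * h1 - 8 * h2 + h3) / 24
  have hd5zero : ∀ x, d5 x = 0 := fun x => (hkey x).1
  -- the fourth derivative is a nonzero constant c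
  have hd4const : ∀ x, d4 x = d4 0 := by
    refine const_of_deriv_zero' hd4diff fun x => ?_
    rw [← hd5def]; exact hd5zero x
  set c : ℂ := d4 0 with hcdef
  have hit4 : ∀ x, iteratedDeriv 4 α x = d4 x := by
    intro x
    rw [show (4 : ℕ) = 3 + 1 from rfl, iteratedDeriv_succ,
      show (3 : ℕ) = 2 + 1 from rfl, iteratedDeriv_succ,
      show (2 : ℕ) = 1 + 1 from rfl, iteratedDeriv_succ,
      show (1 : ℕ) = 0 + 1 from rfl, iteratedDeriv_succ, iteratedDeriv_zero]
  have hc0 : c ≠ 0 := by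
    obtain ⟨x₀, hx₀⟩ := hα4
    rw [hit4 x₀, hd4const x₀] at hx₀
    exact hx₀
  have hE1 : ∀ x,
      10 * (p0 x * c) + 10 * (p1 x * d3 x) + 5 * (p2 x * d2 x) + p3 x * d1 x = 0 := by
    intro x
    have := (hkey x).2
    rwa [hd4const x] at this
  -- α is a polynomial of degree 4
  have hit5 : ∀ x, iteratedDeriv 5 α x = 0 := by
    intro x
    rw [show (5 : ℕ) = 4 + 1 from rfl, iteratedDeriv_succ]
    have : iteratedDeriv 4 α = d4 := funext hit4
    rw [this, ← hd5def]
    exact hd5zero x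
  obtain ⟨P, hP5, hαP⟩ := exists_poly' 5 α hα hit5
  have hαfun : α = fun t => P.eval t := funext hαP
  -- relate d-functions to derivatives of P
  have f1 : d1 = fun t => (Polynomial.derivative P).eval t := by
    funext t
    rw [hd1def, hαfun]
    exact P.deriv
  have f2 : d2 = fun t => (Polynomial.derivative (Polynomial.derivative P)).eval t := by
    funext t
    rw [hd2def, f1]
    exact (Polynomial.derivative P).deriv
  have f3 : d3 = fun t =>
      (Polynomial.derivative (Polynomial.derivative (Polynomial.derivative P))).eval t := by
    funext t
    rw [hd3def, f2]
    exact (Polynomial.derivative (Polynomial.derivative P)).deriv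
  have f4 : d4 = fun t =>
      (Polynomial.derivative (Polynomial.derivative (Polynomial.derivative
        (Polynomial.derivative P)))).eval t := by
    funext t
    rw [hd4def, f3]
    exact (Polynomial.derivative (Polynomial.derivative (Polynomial.derivative P))).deriv
  have hiter4 : Polynomial.derivative^[4] P
      = Polynomial.derivative (Polynomial.derivative (Polynomial.derivative
          (Polynomial.derivative P))) := by
    rw [show (4 : ℕ) = 3 + 1 from rfl, Function.iterate_succ_apply,
      show (3 : ℕ) = 2 + 1 from rfl, Function.iterate_succ_apply,
      show (2 : ℕ) = 1 + 1 from rfl, Function.iterate_succ_apply,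
      Function.iterate_one]
  -- derivative^[4] P is the nonzero constant c
  have hD4 : Polynomial.derivative^[4] P = Polynomial.C c := by
    refine Polynomial.funext fun t => ?_
    rw [hiter4, Polynomial.eval_C]
    have : d4 t = c := hd4const t
    rw [f4] at this
    exact this
  have hD4ne : Polynomial.derivative^[4] P ≠ 0 := by
    rw [hD4]
    simpa using hc0
  have hndP : P.natDegree = 4 := by
    have hle : P.natDegree ≤ 4 := natdeg_le' 4 P hP5
    have hge : ¬ P.natDegree < 4 := fun hlt =>
      hD4ne (Polynomial.iterate_derivative_eq_zero hlt)
    omega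
  have hPne : P ≠ 0 := by
    intro h0
    apply hD4ne
    rw [h0]
    simp
  have hdegP : P.degree = 4 := by
    rw [Polynomial.degree_eq_natDegree hPne, hndP]
    rfl
  refine ⟨⟨P, hdegP, hαP⟩, ?_⟩
  -- now show deriv φ = 0
  set H : ℂ → ℂ := fun x => c * (p2 x * d1 x + 4 * (p1 x * d2 x) + 6 * (p0 x * d3 x))
    with hHdef
  set Ψ : ℂ → ℂ := fun x => 4 * c * (p1 x * d1 x + 3 * (p0 x * d2 x))
      - 3 * ((p2 x * d1 x + 4 * (p1 x * d2 x) + 6 * (p0 x * d3 x)) * d3 x) with hΨdef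
  have hΨdiff : Differentiable ℂ Ψ := by
    rw [hΨdef]
    exact (((hp1diff.mul hd1diff).add ((hp0diff.mul hd2diff).const_mul 3)).const_mul
        (4 * c)).sub
      (((((hp2diff.mul hd1diff).add ((hp1diff.mul hd2diff).const_mul 4)).add
        ((hp0diff.mul hd3diff).const_mul 6)).mul hd3diff).const_mul 3)
  have HH : ∀ x, HasDerivAt H (-(4 * c ^ 2 * p0 x)) x := by
    intro x
    have h := ((((Hp2 x).mul (Hd1 x)).add (((Hp1 x).mul (Hd2 x)).const_mul 4)).add
      (((Hp0 x).mul (Hd3 x)).const_mul 6)).const_mul c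
    have e : c * ((p3 x * d1 x + p2 x * d2 x) + 4 * (p2 x * d2 x + p1 x * d3 x)
        + 6 * (p1 x * d3 x + p0 x * d4 x)) = -(4 * c ^ 2 * p0 x) := by
      rw [hd4const x]
      linear_combination c * hE1 x
    rw [hHdef]
    exact e ▸ h
  have HΨ : ∀ x, HasDerivAt Ψ (H x) x := by
    intro x
    have h := ((((Hp1 x).mul (Hd1 x)).add (((Hp0 x).mul (Hd2 x)).const_mul 3)).const_mul
        (4 * c)).sub
      ((((((Hp2 x).mul (Hd1 x)).add (((Hp1 x).mul (Hd2 x)).const_mul 4)).add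
        (((Hp0 x).mul (Hd3 x)).const_mul 6)).mul (Hd3 x)).const_mul 3)
    have e : 4 * c * ((p2 x * d1 x + p1 x * d2 x) + 3 * (p1 x * d2 x + p0 x * d3 x))
        - 3 * (((p3 x * d1 x + p2 x * d2 x) + 4 * (p2 x * d2 x + p1 x * d3 x)
            + 6 * (p1 x * d3 x + p0 x * d4 x)) * d3 x
          + (p2 x * d1 x + 4 * (p1 x * d2 x) + 6 * (p0 x * d3 x)) * d4 x) = H x := by
      rw [hd4const x, hHdef]
      linear_combination (-3 * d3 x) * hE1 x
    rw [hΨdef]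
    exact e ▸ h
  -- the function g = d1 * Ψ has vanishing 5th derivative
  have e1 : deriv (fun x => d1 x * Ψ x) = fun x => d2 x * Ψ x + d1 x * H x :=
    funext fun z => ((Hd1 z).mul (HΨ z)).deriv
  have e2 : deriv (fun x => d2 x * Ψ x + d1 x * H x)
      = fun x => d3 x * Ψ x + 2 * (d2 x * H x) - 4 * c ^ 2 * (d1 x * p0 x) :=
    funext fun z => by
      have h := ((Hd2 z).mul (HΨ z)).add ((Hd1 z).mul (HH z))
      have e : (d3 z * Ψ z + d2 z * H z) + (d2 z * H z + d1 z * (-(4 * c ^ 2 * p0 z)))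
          = d3 z * Ψ z + 2 * (d2 z * H z) - 4 * c ^ 2 * (d1 z * p0 z) := by ring
      exact (e ▸ h).deriv
  have e3 : deriv (fun x => d3 x * Ψ x + 2 * (d2 x * H x) - 4 * c ^ 2 * (d1 x * p0 x))
      = fun x => c * Ψ x + 3 * (d3 x * H x) - 4 * c ^ 2 * (3 * (d2 x * p0 x) + d1 x * p1 x) :=
    funext fun z => by
      have h := (((Hd3 z).mul (HΨ z)).add
          (((Hd2 z).mul (HH z)).const_mul 2)).sub
        (((Hd1 z).mul (Hp0 z)).const_mul (4 * c ^ 2))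
      have e : (d4 z * Ψ z + d3 z * H z)
            + 2 * (d3 z * H z + d2 z * (-(4 * c ^ 2 * p0 z)))
            - 4 * c ^ 2 * (d2 z * p0 z + d1 z * p1 z)
          = c * Ψ z + 3 * (d3 z * H z) - 4 * c ^ 2 * (3 * (d2 z * p0 z) + d1 z * p1 z) := by
        linear_combination Ψ z * hd4const z
      exact (e ▸ h).deriv
  have e4 : deriv (fun x => c * Ψ x + 3 * (d3 x * H x)
        - 4 * c ^ 2 * (3 * (d2 x * p0 x) + d1 x * p1 x))
      = fun _ => (0 : ℂ) :=
    funext fun z => by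
      have h := (((HΨ z).const_mul c).add
          (((Hd3 z).mul (HH z)).const_mul 3)).sub
        (((((Hd2 z).mul (Hp0 z)).const_mul 3).add ((Hd1 z).mul (Hp1 z))).const_mul (4 * c ^ 2))
      have e : (c * H z + 3 * (d4 z * H z + d3 z * (-(4 * c ^ 2 * p0 z))))
            - 4 * c ^ 2 * (3 * (d3 z * p0 z + d2 z * p1 z) + (d2 z * p1 z + d1 z * p2 z))
          = 0 := by
        rw [hd4const z, hHdef]
        ring
      exact (e ▸ h).deriv
  have hgdiff : Differentiable ℂ fun x => d1 x * Ψ x := hd1diff.mul hΨdiff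
  have hg5 : ∀ x, iteratedDeriv 5 (fun x => d1 x * Ψ x) x = 0 := by
    intro x
    rw [show (5 : ℕ) = 4 + 1 from rfl, iteratedDeriv_succ,
      show (4 : ℕ) = 3 + 1 from rfl, iteratedDeriv_succ,
      show (3 : ℕ) = 2 + 1 from rfl, iteratedDeriv_succ,
      show (2 : ℕ) = 1 + 1 from rfl, iteratedDeriv_succ,
      show (1 : ℕ) = 0 + 1 from rfl, iteratedDeriv_succ, iteratedDeriv_zero]
    rw [e1, e2, e3, e4]
    simp
  obtain ⟨Q, hQ5, hgQ⟩ := exists_poly' 5 (fun x => d1 x * Ψ x) hgdiff hg5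
  -- divide Q by derivative P
  have hdPne : Polynomial.derivative P ≠ 0 := by
    intro h0
    apply hD4ne
    rw [show (4 : ℕ) = 3 + 1 from rfl, Function.iterate_succ_apply, h0]
    simp
  have hndPd : (Polynomial.derivative P).natDegree = 3 := by
    have := Polynomial.degree_derivative_eq P (by omega : 0 < P.natDegree)
    rw [hndP] at this
    exact Polynomial.natDegree_eq_of_degree_eq_some this
  have hQev : ∀ x, (Polynomial.derivative P).eval x * Ψ x = Q.eval x := by
    intro x
    have h1 := hgQ x
    try simp only at h1
    rw [← h1, f1]
  obtain ⟨S, hQS, hΨS⟩ :=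
    div_key' 3 (Polynomial.derivative P) hndPd hdPne Ψ hΨdiff.continuous Q hQev
  -- S has degree at most 1
  have hndS : S.natDegree ≤ 1 := by
    by_cases hS0 : S = 0
    · simp [hS0]
    · have hQne : Q ≠ 0 := by
        rw [hQS]
        exact mul_ne_zero hdPne hS0
      have hQdeg : Q.natDegree ≤ 4 := natdeg_le' 4 Q hQ5
      have := Polynomial.natDegree_mul hdPne hS0
      rw [← hQS, hndPd] at this
      omega
  have hS2 : Polynomial.derivative (Polynomial.derivative S) = 0 := by
    have h1 : (Polynomial.derivative S).natDegree = 0 := by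
      have := Polynomial.natDegree_derivative_le S
      omega
    rw [Polynomial.eq_C_of_natDegree_eq_zero h1]
    simp
  -- conclude: p0 = 0
  intro x
  have hΨfun : Ψ = fun t => S.eval t := funext hΨS
  have hHS : H = fun t => (Polynomial.derivative S).eval t := by
    funext t
    rw [← (HΨ t).deriv, hΨfun]
    exact S.deriv
  have hfin : -(4 * c ^ 2 * p0 x) = 0 := by
    rw [← (HH x).deriv, hHS, (Polynomial.derivative S).deriv, hS2]
    simp
  have h4c : (4 : ℂ) * c ^ 2 ≠ 0 := by
    apply mul_ne_zero
    · norm_num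
    · exact pow_ne_zero 2 hc0
  have := neg_eq_zero.mp hfin
  exact (mul_eq_zero.mp this).resolve_left h4c
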